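/- (Hardy-type inequality on the half-space) Let N ≥ 3. For every continuously differentiable function u : ℝ^N → ℝ with compact support, (N²/4)∫_{ℝ^N_+} u(x)² dx ≤ ∫_{ℝ^N_+} (x·∇u(x))² dx. -/

import Mathlib

open MeasureTheory Real Filter Topology Asymptotics

noncomputable section

/-- The index of the last coordinate of `ℝ^N`. -/
def lastIdx (N : ℕ) (hN : 0 < N) : Fin N := ⟨N - 1, by omega⟩

/-- The open upper half-space `ℝ^N_+ = {x : x_N > 0}`. -/
def upperHalf (N : ℕ) (hN : 0 < N) : Set (EuclideanSpace ℝ (Fin N)) :=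
  {x | 0 < x (lastIdx N hN)}

/-- The closed upper half-space `{x : x_N ≥ 0}`. -/
def closedHalf (N : ℕ) (hN : 0 < N) : Set (EuclideanSpace ℝ (Fin N)) :=
  {x | 0 ≤ x (lastIdx N hN)}

/-- The embedding `ℝ^{N-1} → ℝ^N`, `x' ↦ (x', 0)`. -/
def pad (N : ℕ) (x' : EuclideanSpace ℝ (Fin (N - 1))) : EuclideanSpace ℝ (Fin N) :=
  (EuclideanSpace.equiv (Fin N) ℝ).symm fun i =>
    if h : (i : ℕ) < N - 1 then x' ⟨i, h⟩ else 0

/-- The partial derivative `∂u/∂x_i`. -/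
def pderiv' {N : ℕ} (u : EuclideanSpace ℝ (Fin N) → ℝ) (i : Fin N)
    (x : EuclideanSpace ℝ (Fin N)) : ℝ :=
  fderiv ℝ u x (EuclideanSpace.single i 1)

/-- The Laplacian `Δu = ∑_i ∂²u/∂x_i²`. -/
def lap {N : ℕ} (u : EuclideanSpace ℝ (Fin N) → ℝ) (x : EuclideanSpace ℝ (Fin N)) : ℝ :=
  ∑ i, pderiv' (pderiv' u i) i x

/-- The radial derivative `x · ∇u`. -/
def radDeriv {N : ℕ} (u : EuclideanSpace ℝ (Fin N) → ℝ) (x : EuclideanSpace ℝ (Fin N)) : ℝ :=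
  ∑ i, x i * pderiv' u i x

/-- The exponential weight `K(x) = e^{|x|²/4}`. -/
def Kw {N : ℕ} (x : EuclideanSpace ℝ (Fin N)) : ℝ := Real.exp (‖x‖ ^ 2 / 4)

/-- `|x'|²`, the squared norm of the first `N - 1` coordinates of `x`. -/
def normSq' {N : ℕ} (x : EuclideanSpace ℝ (Fin N)) : ℝ :=
  ∑ i : Fin N, if (i : ℕ) < N - 1 then (x i) ^ 2 else 0

/-- `k_N = (√(N(N-2)))^{(N-2)/2}`. -/
def kN (N : ℕ) : ℝ := Real.sqrt ((N : ℝ) * ((N : ℝ) - 2)) ^ (((N : ℝ) - 2) / 2)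

/-- `x_N⁰ = √(N/(N-2))`. -/
def xN0 (N : ℕ) : ℝ := Real.sqrt ((N : ℝ) / ((N : ℝ) - 2))

/-- The critical Sobolev exponent `2^* = 2N/(N-2)`. -/
def pstar (N : ℕ) : ℝ := 2 * (N : ℝ) / ((N : ℝ) - 2)

/-- The critical trace exponent `2_* = 2(N-1)/(N-2)`. -/
def pstarb (N : ℕ) : ℝ := 2 * ((N : ℝ) - 1) / ((N : ℝ) - 2)

/-- The instanton `U_ε` (denoted `φ_{ε,1}` in the paper). -/
def Ueps (N : ℕ) (hN : 0 < N) (ε : ℝ) (x : EuclideanSpace ℝ (Fin N)) : ℝ :=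
  kN N * (ε / (ε ^ 2 + normSq' x + (x (lastIdx N hN) + ε * xN0 N) ^ 2)) ^ (((N : ℝ) - 2) / 2)

/-- The instanton `Û_ε` for the trace inequality. -/
def Uhat (N : ℕ) (hN : 0 < N) (ε : ℝ) (x : EuclideanSpace ℝ (Fin N)) : ℝ :=
  (ε / (normSq' x + (x (lastIdx N hN) + ε) ^ 2)) ^ (((N : ℝ) - 2) / 2)

/-- A cutoff `φ` is admissible if it is smooth, `[0,1]`-valued, `≡ 1` on `B₁(0) ∩ {x_N ≥ 0}`
and `≡ 0` on `{x_N ≥ 0} \ B₂(0)`. -/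
structure AdmissibleCutoff (N : ℕ) (hN : 0 < N) (φ : EuclideanSpace ℝ (Fin N) → ℝ) : Prop where
  smooth : ContDiff ℝ (⊤ : ℕ∞) φ
  mem01 : ∀ x, φ x ∈ Set.Icc (0 : ℝ) 1
  eq_one : ∀ x ∈ Metric.ball (0 : EuclideanSpace ℝ (Fin N)) 1 ∩ closedHalf N hN, φ x = 1
  eq_zero : ∀ x ∈ closedHalf N hN \ Metric.ball (0 : EuclideanSpace ℝ (Fin N)) 2, φ x = 0

/-- The test function `u_ε = K^{-1/2} φ U_ε`. -/
def ueps (N : ℕ) (hN : 0 < N) (φ : EuclideanSpace ℝ (Fin N) → ℝ) (ε : ℝ)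
    (x : EuclideanSpace ℝ (Fin N)) : ℝ :=
  Real.exp (-‖x‖ ^ 2 / 8) * φ x * Ueps N hN ε x

/-- The test function `û_ε = K^{-1/2} φ Û_ε`. -/
def uhat (N : ℕ) (hN : 0 < N) (φ : EuclideanSpace ℝ (Fin N) → ℝ) (ε : ℝ)
    (x : EuclideanSpace ℝ (Fin N)) : ℝ :=
  Real.exp (-‖x‖ ^ 2 / 8) * φ x * Uhat N hN ε x

/-- The area of the unit sphere in `ℝ^n` (equal to `n` times the volume of the unit ball). -/
def sphereArea (n : ℕ) : ℝ :=
  n * (volume (Metric.ball (0 : EuclideanSpace ℝ (Fin n)) 1)).toReal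

/-- The Beta function `B(a,b) = Γ(a)Γ(b)/Γ(a+b)`. -/
def betaFn (a b : ℝ) : ℝ := Real.Gamma a * Real.Gamma b / Real.Gamma (a + b)

/-- The constant `α_N`. -/
def alphaN (N : ℕ) (hN : 0 < N) : ℝ :=
  ((N : ℝ) - 2) * kN N ^ 2 / 2 *
    ∫ y in upperHalf N hN,
      (normSq' y + y (lastIdx N hN) * (y (lastIdx N hN) + xN0 N)) /
        (1 + normSq' y + (y (lastIdx N hN) + xN0 N) ^ 2) ^ (N - 1)

/-- The constant `β_N`. -/
def betaN (N : ℕ) (hN : 0 < N) : ℝ :=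
  kN N ^ pstar N / (2 * ((N : ℝ) - 2)) *
    ∫ y in upperHalf N hN,
      ‖y‖ ^ 2 / (1 + normSq' y + (y (lastIdx N hN) + xN0 N) ^ 2) ^ N

/-- The constant `γ_N`. -/
def gammaN (N : ℕ) : ℝ :=
  kN N ^ pstarb N / (4 * ((N : ℝ) - 2)) *
    ∫ y' : EuclideanSpace ℝ (Fin (N - 1)),
      ‖y'‖ ^ 2 / (1 + ‖y'‖ ^ 2 + xN0 N ^ 2) ^ (N - 1)

/-- The constant `d_N`. -/
def dN (N : ℕ) (hN : 0 < N) : ℝ :=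
  kN N ^ 2 *
    ∫ y in upperHalf N hN,
      ((1 + normSq' y + (y (lastIdx N hN) + xN0 N) ^ 2) ^ (N - 2))⁻¹

/-- The threshold `λ_N^* = α_N/d_N + (2/2^*)·β_N/d_N + (2/2_*)·γ_N/d_N`. -/
def lamStar (N : ℕ) (hN : 0 < N) : ℝ :=
  alphaN N hN / dN N hN + (2 / pstar N) * betaN N hN / dN N hN
    + (2 / pstarb N) * gammaN N / dN N hN

/-- The threshold `λ̄` of Theorem 1.2 (1). -/
def lamBar (N : ℕ) (hN : 0 < N) : ℝ :=
  if N = 3 then (3 + Real.sqrt 5) / 4 else if N = 4 then 1 else lamStar N hN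

/-- The threshold `λ̂` of Theorem 1.3 (1). -/
def lamHat (N : ℕ) : ℝ :=
  if N = 3 then (3 + Real.sqrt 5) / 4 else (N : ℝ) / 4 + ((N : ℝ) - 4) / 8

/-- The shifted bubble `φ_{ε,τ}`. -/
def phiB (N : ℕ) (hN : 0 < N) (ε τ : ℝ) (x : EuclideanSpace ℝ (Fin N)) : ℝ :=
  kN N * (ε / (ε ^ 2 + normSq' x + (x (lastIdx N hN) + ε * τ * xN0 N) ^ 2))
    ^ (((N : ℝ) - 2) / 2)

/-- The function `ψ(x) = e^{-|x|²/(8√5)}` (dimension 3). -/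
def psi3 (x : EuclideanSpace ℝ (Fin 3)) : ℝ := Real.exp (-‖x‖ ^ 2 / (8 * Real.sqrt 5))

/-- The test function `v_ε = K^{-1/2} ψ U_ε` (dimension 3). -/
def veps (ε : ℝ) (x : EuclideanSpace ℝ (Fin 3)) : ℝ :=
  Real.exp (-‖x‖ ^ 2 / 8) * psi3 x * Ueps 3 (by norm_num) ε x

/-- `K₁ = ∫_{ℝ³₊} |∇U_ε|²` (independent of `ε`). -/
def K1const : ℝ :=
  ∫ x in upperHalf 3 (by norm_num), ‖gradient (Ueps 3 (by norm_num) 1) x‖ ^ 2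

/-- `K₂ = ∫_{ℝ³₊} U_ε⁶` (independent of `ε`). -/
def K2const : ℝ := ∫ x in upperHalf 3 (by norm_num), Ueps 3 (by norm_num) 1 x ^ 6

/-- `K₃ = ∫_{ℝ²} U_ε(x',0)⁴ dx'` (independent of `ε`). -/
def K3const : ℝ :=
  ∫ x' : EuclideanSpace ℝ (Fin 2), Ueps 3 (by norm_num) 1 (pad 3 x') ^ 4

/-- `A_N = ∫_{ℝ^N_+} |∇Û_ε|²` (independent of `ε`). -/
def Ahat (N : ℕ) (hN : 0 < N) : ℝ :=
  ∫ x in upperHalf N hN, ‖gradient (Uhat N hN 1) x‖ ^ 2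

/-- The constant `α̂_N`. -/
def alphaHat (N : ℕ) : ℝ :=
  sphereArea (N - 1) * ((N : ℝ) - 2) / (4 * ((N : ℝ) - 4)) *
    (betaFn (((N : ℝ) + 1) / 2) (((N : ℝ) - 3) / 2)
      + 1 / ((N : ℝ) - 3) * betaFn (((N : ℝ) - 1) / 2) (((N : ℝ) - 1) / 2))

/-- The constant `γ̂_N`. -/
def gammaHat (N : ℕ) : ℝ :=
  sphereArea (N - 1) / (8 * ((N : ℝ) - 2)) * betaFn (((N : ℝ) + 1) / 2) (((N : ℝ) - 3) / 2)

/-- The constant `d̂_N`. -/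
def dHat (N : ℕ) : ℝ :=
  sphereArea (N - 1) / (2 * ((N : ℝ) - 4)) * betaFn (((N : ℝ) - 1) / 2) (((N : ℝ) - 3) / 2)

/-- `T_N = ∫_{ℝ^{N-1}} Û_ε(x',0)^{2_*} dx'` (independent of `ε`;
`T_N = B_N^{2_*/2}` in the paper's notation). -/
def Tconst (N : ℕ) (hN : 0 < N) : ℝ :=
  ∫ x' : EuclideanSpace ℝ (Fin (N - 1)), Uhat N hN 1 (pad N x') ^ pstarb N


lemma abs_coord_le_norm' {m : ℕ} (x : EuclideanSpace ℝ (Fin m)) (i : Fin m) :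
    |x i| ≤ ‖x‖ := by
  rw [EuclideanSpace.norm_eq, ← Real.sqrt_sq_eq_abs]
  apply Real.sqrt_le_sqrt
  have := Finset.single_le_sum (f := fun j => ‖x j‖ ^ 2) (fun j _ => sq_nonneg _)
    (Finset.mem_univ i)
  simpa [sq_abs] using this

lemma hardy_div_key (n : ℕ) (u : EuclideanSpace ℝ (Fin (n+1)) → ℝ)
    (hu : ContDiff ℝ 1 u) (hsupp : HasCompactSupport u) :
    ∫ x in {x : EuclideanSpace ℝ (Fin (n+1)) | 0 < x (Fin.last n)},
      (((n : ℝ) + 1) * u x ^ 2 + 2 * (u x * radDeriv u x)) = 0 := by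
  classical
  set L : Fin (n+1) := Fin.last n with hL
  set Φ : (Fin (n+1) → ℝ) ≃L[ℝ] EuclideanSpace ℝ (Fin (n+1)) :=
    (EuclideanSpace.equiv (Fin (n+1)) ℝ).symm with hΦ
  obtain ⟨R, hR⟩ : ∃ R, tsupport u ⊆ Metric.closedBall 0 R :=
    hsupp.isBounded.subset_closedBall 0
  set B : ℝ := max R 0 + 1 with hB
  have hBpos : 0 < B := by positivity
  have hRB : R < B := by simp only [hB]; nlinarith [le_max_left R 0]
  have houtside : ∀ x : EuclideanSpace ℝ (Fin (n+1)), (∃ i, B ≤ |x i|) → u x = 0 := by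
    rintro x ⟨i, hi⟩
    apply image_eq_zero_of_notMem_tsupport
    intro hmem
    have h2 : ‖x‖ ≤ R := by
      simpa [Metric.mem_closedBall, dist_zero_right] using hR hmem
    have h1 := abs_coord_le_norm' x i
    linarith
  set a : Fin (n+1) → ℝ := fun i => if i = L then 0 else -B with ha
  set b : Fin (n+1) → ℝ := fun _ => B with hb
  have hab : a ≤ b := by
    intro i
    by_cases h : i = L <;> simp [ha, hb, h] <;> linarith
  set f : Fin (n+1) → (Fin (n+1) → ℝ) → ℝ := fun i y => y i * (u (Φ y) * u (Φ y)) with hf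
  set f' : Fin (n+1) → (Fin (n+1) → ℝ) → (Fin (n+1) → ℝ) →L[ℝ] ℝ := fun i y =>
    y i • (u (Φ y) • ((fderiv ℝ u (Φ y)).comp
        (Φ : (Fin (n+1) → ℝ) →L[ℝ] EuclideanSpace ℝ (Fin (n+1))))
      + u (Φ y) • ((fderiv ℝ u (Φ y)).comp
        (Φ : (Fin (n+1) → ℝ) →L[ℝ] EuclideanSpace ℝ (Fin (n+1)))))
    + (u (Φ y) * u (Φ y)) • (ContinuousLinearMap.proj i : (Fin (n+1) → ℝ) →L[ℝ] ℝ) with hf'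
  have hucont : Continuous u := hu.continuous
  have Hd : ∀ y : Fin (n+1) → ℝ, ∀ i, HasFDerivAt (f i) (f' i y) y := by
    intro y i
    have hw : HasFDerivAt (fun y : Fin (n+1) → ℝ => u (Φ y))
        ((fderiv ℝ u (Φ y)).comp (Φ : (Fin (n+1) → ℝ) →L[ℝ] EuclideanSpace ℝ (Fin (n+1)))) y :=
      ((hu.differentiable one_ne_zero (Φ y)).hasFDerivAt).comp y Φ.hasFDerivAt
    have hproj : HasFDerivAt (fun y : Fin (n+1) → ℝ => y i)
        (ContinuousLinearMap.proj i : (Fin (n+1) → ℝ) →L[ℝ] ℝ) y :=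
      (ContinuousLinearMap.proj i : (Fin (n+1) → ℝ) →L[ℝ] ℝ).hasFDerivAt
    exact hproj.mul (hw.mul hw)
  have hsingle : ∀ i : Fin (n+1),
      Φ (Pi.single i 1) = EuclideanSpace.single i (1 : ℝ) := fun i => rfl
  have hgdiv : ∀ y : Fin (n+1) → ℝ, (∑ i, f' i y (Pi.single i 1))
      = ((n : ℝ) + 1) * u (Φ y) ^ 2 + 2 * (u (Φ y) * radDeriv u (Φ y)) := by
    intro y
    have h1 : ∀ i : Fin (n+1), f' i y (Pi.single i 1)
        = y i * (2 * u (Φ y) * pderiv' u i (Φ y)) + u (Φ y) ^ 2 := by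
      intro i
      simp only [hf', ContinuousLinearMap.add_apply, ContinuousLinearMap.smul_apply,
        ContinuousLinearMap.coe_comp', Function.comp_apply, ContinuousLinearMap.proj_apply,
        Pi.single_eq_same, smul_eq_mul, pderiv', ContinuousLinearEquiv.coe_coe]
      rw [hsingle i]
      ring
    rw [Finset.sum_congr rfl fun i _ => h1 i, Finset.sum_add_distrib, Finset.sum_const,
      Finset.card_univ, Fintype.card_fin, nsmul_eq_mul]
    have hsum : (2:ℝ) * (u (Φ y) * radDeriv u (Φ y))
        = ∑ i, y i * (2 * u (Φ y) * pderiv' u i (Φ y)) := by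
      rw [show radDeriv u (Φ y) = ∑ i, y i * pderiv' u i (Φ y) from rfl, Finset.mul_sum,
        Finset.mul_sum]
      exact Finset.sum_congr rfl fun i _ => by ring
    rw [hsum]
    push_cast
    ring
  have hrad : Continuous (radDeriv u) := by
    refine continuous_finset_sum _ fun i _ => ?_
    exact ((EuclideanSpace.proj i).continuous).mul
      ((hu.continuous_fderiv one_ne_zero).clm_apply continuous_const)
  have hgcont : Continuous fun y : Fin (n+1) → ℝ =>
      ((n : ℝ) + 1) * u (Φ y) ^ 2 + 2 * (u (Φ y) * radDeriv u (Φ y)) := by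
    have h1 : Continuous fun y : Fin (n+1) → ℝ => u (Φ y) := hucont.comp Φ.continuous
    have h2 : Continuous fun y : Fin (n+1) → ℝ => radDeriv u (Φ y) := hrad.comp Φ.continuous
    fun_prop
  have Hi : IntegrableOn (fun y => ∑ i, f' i y (Pi.single i 1)) (Set.Icc a b) := by
    rw [funext hgdiv]
    exact hgcont.continuousOn.integrableOn_compact isCompact_Icc
  have hdiv := integral_divergence_of_hasFDerivAt_off_countable' a b hab f f' ∅
    Set.countable_empty
    (fun i => (((continuous_apply i).mul
      ((hucont.comp Φ.continuous).mul (hucont.comp Φ.continuous)))).continuousOn)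
    (fun y _ i => Hd y i) Hi
  have hfront : ∀ (i : Fin (n+1)) (x : Fin n → ℝ), f i (i.insertNth (b i) x) = 0 := by
    intro i x
    have h0 : u (Φ (i.insertNth (b i) x)) = 0 := by
      apply houtside
      refine ⟨i, ?_⟩
      show B ≤ |(i.insertNth (b i) x : Fin (n+1) → ℝ) i|
      rw [Fin.insertNth_apply_same]
      simp [hb, abs_of_pos hBpos]
    simp [hf, h0]
  have hback : ∀ (i : Fin (n+1)) (x : Fin n → ℝ), f i (i.insertNth (a i) x) = 0 := by
    intro i x
    by_cases h : i = L
    · simp only [hf]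
      have hz : (i.insertNth (a i) x : Fin (n+1) → ℝ) i = 0 := by
        rw [Fin.insertNth_apply_same]
        simp [ha, h]
      rw [hz]
      ring
    · have h0 : u (Φ (i.insertNth (a i) x)) = 0 := by
        apply houtside
        refine ⟨i, ?_⟩
        show B ≤ |(i.insertNth (a i) x : Fin (n+1) → ℝ) i|
        rw [Fin.insertNth_apply_same]
        simp [ha, h, abs_of_pos hBpos, abs_neg]
      simp [hf, h0]
  have hIcc0 : ∫ y in Set.Icc a b,
      (((n : ℝ) + 1) * u (Φ y) ^ 2 + 2 * (u (Φ y) * radDeriv u (Φ y))) = 0 := by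
    rw [← funext hgdiv, hdiv]
    apply Finset.sum_eq_zero
    intro i _
    rw [show (fun x => f i (i.insertNth (b i) x)) = fun _ => (0:ℝ) from funext (hfront i),
      show (fun x => f i (i.insertNth (a i) x)) = fun _ => (0:ℝ) from funext (hback i)]
    simp
  -- extend from the box to the closed half space
  set T : Set (Fin (n+1) → ℝ) := {y | 0 ≤ y L} with hT
  have hTmeas : MeasurableSet T := by
    exact measurableSet_le measurable_const (measurable_pi_apply L)
  have hsub : Set.Icc a b ⊆ T := by
    intro y hy
    have := (Set.mem_Icc.1 hy).1 L
    simpa [hT, ha] using this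
  have hvanish : ∀ y ∈ T \ Set.Icc a b,
      (((n : ℝ) + 1) * u (Φ y) ^ 2 + 2 * (u (Φ y) * radDeriv u (Φ y))) = 0 := by
    rintro y ⟨hyT, hyIcc⟩
    have h0 : u (Φ y) = 0 := by
      apply houtside
      rw [Set.mem_Icc] at hyIcc
      push_neg at hyIcc
      by_cases hle : a ≤ y
      · have h2 : ¬ y ≤ b := hyIcc hle
        rw [Pi.le_def] at h2
        push_neg at h2
        obtain ⟨i, hi⟩ := h2
        have hbi : B < y i := by simpa [hb] using hi
        refine ⟨i, ?_⟩
        show B ≤ |y i|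
        rw [abs_of_pos (lt_trans hBpos hbi)]
        linarith
      · rw [Pi.le_def] at hle
        push_neg at hle
        obtain ⟨i, hi⟩ := hle
        have hiL : i ≠ L := by
          intro hiL
          rw [hiL] at hi
          have h1 : (0:ℝ) ≤ y L := hyT
          simp only [ha, if_pos rfl] at hi
          linarith
        have hai : y i < -B := by simpa [ha, hiL] using hi
        refine ⟨i, ?_⟩
        show B ≤ |y i|
        rw [abs_of_neg (by linarith)]
        linarith
    rw [h0]
    ring
  have hTIcc : ∫ y in T, (((n : ℝ) + 1) * u (Φ y) ^ 2 + 2 * (u (Φ y) * radDeriv u (Φ y)))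
      = ∫ y in Set.Icc a b,
        (((n : ℝ) + 1) * u (Φ y) ^ 2 + 2 * (u (Φ y) * radDeriv u (Φ y))) :=
    setIntegral_eq_of_subset_of_ae_diff_eq_zero hTmeas.nullMeasurableSet hsub
      (Filter.Eventually.of_forall hvanish)
  -- the open half space differs from T by a null set
  have hnull : (volume : Measure (Fin (n+1) → ℝ)) {y | y L = 0} = 0 := by
    rw [volume_pi]
    exact MeasureTheory.Measure.pi_hyperplane _ L 0
  set S : Set (Fin (n+1) → ℝ) := {y | 0 < y L} with hS
  have hST : ∫ y in T, (((n : ℝ) + 1) * u (Φ y) ^ 2 + 2 * (u (Φ y) * radDeriv u (Φ y)))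
      = ∫ y in S, (((n : ℝ) + 1) * u (Φ y) ^ 2 + 2 * (u (Φ y) * radDeriv u (Φ y))) := by
    apply setIntegral_eq_of_subset_of_ae_diff_eq_zero hTmeas.nullMeasurableSet
    · intro y hy
      exact le_of_lt (show (0:ℝ) < y L from hy)
    · have hae : ∀ᵐ y : Fin (n+1) → ℝ, y L ≠ 0 := compl_mem_ae_iff.2 hnull
      filter_upwards [hae] with y hy hmem
      exfalso
      exact hy (le_antisymm (not_lt.1 hmem.2) hmem.1)
  -- transfer to Euclidean space
  have htrans := (EuclideanSpace.volume_preserving_symm_measurableEquiv_toLp (Fin (n+1))).setIntegral_preimage_emb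
    (MeasurableEquiv.toLp 2 (Fin (n+1) → ℝ)).symm.measurableEmbedding
    (fun y => (((n : ℝ) + 1) * u (Φ y) ^ 2 + 2 * (u (Φ y) * radDeriv u (Φ y)))) S
  calc ∫ x in {x : EuclideanSpace ℝ (Fin (n+1)) | 0 < x L},
        (((n : ℝ) + 1) * u x ^ 2 + 2 * (u x * radDeriv u x))
      = ∫ y in S, (((n : ℝ) + 1) * u (Φ y) ^ 2 + 2 * (u (Φ y) * radDeriv u (Φ y))) := htrans
    _ = 0 := by rw [← hST, hTIcc]; exact hIcc0

/-- **Hardy-type inequality on the half-space.** -/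
theorem hardy_type_inequality
    (N : ℕ) (hN : 3 ≤ N) (u : EuclideanSpace ℝ (Fin N) → ℝ)
    (hu : ContDiff ℝ 1 u) (hsupp : HasCompactSupport u) :
    (N : ℝ) ^ 2 / 4 * (∫ x in upperHalf N (by omega), u x ^ 2)
      ≤ ∫ x in upperHalf N (by omega), radDeriv u x ^ 2 := by
  obtain ⟨n, rfl⟩ : ∃ n, N = n + 1 := ⟨N - 1, by omega⟩
  show ((n + 1 : ℕ) : ℝ) ^ 2 / 4
      * (∫ x in {x : EuclideanSpace ℝ (Fin (n+1)) | 0 < x (Fin.last n)}, u x ^ 2)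
    ≤ ∫ x in {x : EuclideanSpace ℝ (Fin (n+1)) | 0 < x (Fin.last n)}, radDeriv u x ^ 2
  set S : Set (EuclideanSpace ℝ (Fin (n+1))) := {x | 0 < x (Fin.last n)} with hS
  have hSm : MeasurableSet S :=
    measurableSet_lt measurable_const (EuclideanSpace.proj (Fin.last n)).continuous.measurable
  have hucont : Continuous u := hu.continuous
  have hrad : Continuous (radDeriv u) := by
    refine continuous_finset_sum _ fun i _ => ?_
    exact ((EuclideanSpace.proj i).continuous).mul
      ((hu.continuous_fderiv one_ne_zero).clm_apply continuous_const)
  have hDsupp : HasCompactSupport (fderiv ℝ u) := hsupp.fderiv (𝕜 := ℝ)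
  have hradsupp : HasCompactSupport (radDeriv u) := by
    apply HasCompactSupport.intro hDsupp
    intro x hx
    have h0 : fderiv ℝ u x = 0 := image_eq_zero_of_notMem_tsupport hx
    simp [radDeriv, pderiv', h0]
  have hi1 : Integrable (fun x : EuclideanSpace ℝ (Fin (n+1)) => u x ^ 2) :=
    (hucont.pow 2).integrable_of_hasCompactSupport
      (hsupp.comp_left (g := fun t : ℝ => t ^ 2) (by simp) : HasCompactSupport fun x => u x ^ 2)
  have hi2 : Integrable (fun x : EuclideanSpace ℝ (Fin (n+1)) => u x * radDeriv u x) :=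
    (hucont.mul hrad).integrable_of_hasCompactSupport
      (hsupp.mul_right : HasCompactSupport fun x => u x * radDeriv u x)
  have hi3 : Integrable (fun x : EuclideanSpace ℝ (Fin (n+1)) => radDeriv u x ^ 2) :=
    (hrad.pow 2).integrable_of_hasCompactSupport
      (hradsupp.comp_left (g := fun t : ℝ => t ^ 2) (by simp) :
        HasCompactSupport fun x => radDeriv u x ^ 2)
  have key := hardy_div_key n u hu hsupp
  have key2 : ((n:ℝ)+1) * (∫ x in S, u x ^ 2) + 2 * ∫ x in S, u x * radDeriv u x = 0 := by
    rw [← integral_const_mul, ← integral_const_mul,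
      ← integral_add ((hi1.integrableOn).const_mul _) ((hi2.integrableOn).const_mul _)]
    exact key
  have hpos : 0 ≤ ∫ x in S, (((n:ℝ)+1)/2 * u x + radDeriv u x) ^ 2 :=
    setIntegral_nonneg hSm fun x _ => sq_nonneg _
  have hexp : ∫ x in S, (((n:ℝ)+1)/2 * u x + radDeriv u x) ^ 2
      = ((n:ℝ)+1)^2/4 * (∫ x in S, u x ^ 2)
        + ((n:ℝ)+1) * (∫ x in S, u x * radDeriv u x)
        + ∫ x in S, radDeriv u x ^ 2 := by
    calc ∫ x in S, (((n:ℝ)+1)/2 * u x + radDeriv u x) ^ 2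
        = ∫ x in S, (((n:ℝ)+1)^2/4 * u x ^ 2
            + (((n:ℝ)+1) * (u x * radDeriv u x) + radDeriv u x ^ 2)) :=
          integral_congr_ae (Filter.Eventually.of_forall fun x => by ring)
      _ = ((n:ℝ)+1)^2/4 * (∫ x in S, u x ^ 2)
            + (((n:ℝ)+1) * (∫ x in S, u x * radDeriv u x) + ∫ x in S, radDeriv u x ^ 2) := by
          have A : IntegrableOn (fun x => ((n:ℝ)+1)^2/4 * u x ^ 2) S :=
            (hi1.integrableOn).const_mul _
          have Bi : IntegrableOn (fun x => ((n:ℝ)+1) * (u x * radDeriv u x)) S :=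
            (hi2.integrableOn).const_mul _
          have Ci : IntegrableOn (fun x : EuclideanSpace ℝ (Fin (n+1)) => radDeriv u x ^ 2) S :=
            hi3.integrableOn
          have BC : IntegrableOn
              (fun x => ((n:ℝ)+1) * (u x * radDeriv u x) + radDeriv u x ^ 2) S := Bi.add Ci
          rw [integral_add A BC, integral_add Bi Ci, integral_const_mul, integral_const_mul]
      _ = _ := by ring
  have hfin : (0:ℝ) ≤ ((n:ℝ)+1)^2/4 * (∫ x in S, u x ^ 2)
      + ((n:ℝ)+1) * (∫ x in S, u x * radDeriv u x) + ∫ x in S, radDeriv u x ^ 2 :=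
    hexp ▸ hpos
  push_cast
  nlinarith [key2, hfin]
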